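/- Let f : ℝ^d → ℝ be ρ-weakly convex, continuous, and bounded below, with ρ, η, β > 0. Suppose that for each x ∈ ℝ^d there is a continuous η-weakly convex model f_x : ℝ^d → ℝ with |f(y) − f_x(y)| ≤ (β/2)‖y − x‖² for all y. Let τ > max{η, 2ρ, (4β + ρ + η)/2}, set ρ̂ = τ/2 + (ρ + η)/4, and fix α ∈ (0, 1]. Define a sequence by choosing x₀ ∈ ℝ^d and, for each t ≥ 0, letting y_t be the unique minimizer of z ↦ f_{x_t}(z) + (τ/2)‖z − x_t‖² and x_{t+1} = (1 − α)x_t + α y_t. Denote by P(u) the unique minimizer of z ↦ f(z) + (ρ̂/2)‖z − u‖² and by F(u) = f(P(u)) + (ρ̂/2)‖P(u) − u‖² the Moreau envelope. Then for every T ≥ 0: min_{t = 0,…,T} ‖ρ̂(x_t − P(x_t))‖ ≤ √( (F(x₀) − inf f) / ( (α(2ρ̂ − ρ − η − β)/(2ρ̂(ρ̂ + τ − ρ − η)))·(T + 1) ) ). -/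

import Mathlib

open Set Filter Topology

lemma combo_norm_sq {E : Type*} [NormedAddCommGroup E] [InnerProductSpace ℝ E]
    (lam : ℝ) (u v p : E) :
    ‖((1 - lam) • u + lam • v) - p‖ ^ 2
      = (1 - lam) * ‖u - p‖ ^ 2 + lam * ‖v - p‖ ^ 2 - lam * (1 - lam) * ‖v - u‖ ^ 2 := by
  have h : ∀ a : E, ‖a‖ ^ 2 = (inner ℝ a a : ℝ) := fun a => (real_inner_self_eq_norm_sq a).symm
  rw [h, h, h, h]
  simp only [inner_sub_left, inner_sub_right, inner_add_left, inner_add_right,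
    inner_smul_left, inner_smul_right, RCLike.conj_to_real, conj_trivial]
  rw [real_inner_comm v u, real_inner_comm p u, real_inner_comm p v]
  ring

lemma strong_min {E : Type*} [NormedAddCommGroup E] [InnerProductSpace ℝ E]
    (g : E → ℝ) (s m : ℝ)
    (hconv : ConvexOn ℝ Set.univ (fun z => g z + s / 2 * ‖z‖ ^ 2))
    (c w : E)
    (hmin : ∀ z, g w + m / 2 * ‖w - c‖ ^ 2 ≤ g z + m / 2 * ‖z - c‖ ^ 2) (z : E) :
    g w + m / 2 * ‖w - c‖ ^ 2 + (m - s) / 2 * ‖z - w‖ ^ 2 ≤ g z + m / 2 * ‖z - c‖ ^ 2 := by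
  have key : ∀ lam : ℝ, lam ∈ Ioo (0:ℝ) 1 →
      g w + m / 2 * ‖w - c‖ ^ 2 + (m - s) * (1 - lam) / 2 * ‖z - w‖ ^ 2
        ≤ g z + m / 2 * ‖z - c‖ ^ 2 := by
    intro lam hlam
    obtain ⟨hl0, hl1⟩ := hlam
    have hψ := hconv.2 (mem_univ w) (mem_univ z) (by linarith : (0:ℝ) ≤ 1 - lam)
      (le_of_lt hl0) (by ring)
    simp only [smul_eq_mul] at hψ
    have id0 := combo_norm_sq lam w z 0
    have id1 := combo_norm_sq lam w z c
    simp only [sub_zero] at id0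
    rw [id0] at hψ
    have h1 : g ((1 - lam) • w + lam • z)
        ≤ (1 - lam) * g w + lam * g z + s * lam * (1 - lam) / 2 * ‖z - w‖ ^ 2 := by
      nlinarith [hψ]
    have h2 := hmin ((1 - lam) • w + lam • z)
    rw [id1] at h2
    have hfin : lam * (g w + m / 2 * ‖w - c‖ ^ 2 + (m - s) * (1 - lam) / 2 * ‖z - w‖ ^ 2)
        ≤ lam * (g z + m / 2 * ‖z - c‖ ^ 2) := by nlinarith [h1, h2]
    exact le_of_mul_le_mul_left hfin hl0
  have hco : ContinuousWithinAt (fun lam : ℝ => g w + m / 2 * ‖w - c‖ ^ 2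
      + (m - s) * (1 - lam) / 2 * ‖z - w‖ ^ 2) (Ioi (0:ℝ)) 0 :=
    Continuous.continuousWithinAt (by fun_prop)
  have lim : Tendsto (fun lam : ℝ => g w + m / 2 * ‖w - c‖ ^ 2
      + (m - s) * (1 - lam) / 2 * ‖z - w‖ ^ 2) (𝓝[>] (0:ℝ))
      (𝓝 (g w + m / 2 * ‖w - c‖ ^ 2 + (m - s) / 2 * ‖z - w‖ ^ 2)) := by
    have h0 : g w + m / 2 * ‖w - c‖ ^ 2 + (m - s) / 2 * ‖z - w‖ ^ 2
        = g w + m / 2 * ‖w - c‖ ^ 2 + (m - s) * (1 - (0:ℝ)) / 2 * ‖z - w‖ ^ 2 := by ring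
    rw [h0]; exact hco
  refine le_of_tendsto lim ?_
  filter_upwards [Ioo_mem_nhdsGT_of_mem (by norm_num : (0:ℝ) ∈ Ico (0:ℝ) 1)] with lam hlam
  exact key lam hlam


set_option maxHeartbeats 1000000 in
/-- Rate of decrease of the Moreau envelope gradient: For the relaxed
model-based algorithm `x_{t+1} = (1 − α)x_t + α y_t` (with `y_t` minimizing the model
subproblem at `x_t`), with `f` bounded below, `τ > max{η, 2ρ, (4β + ρ + η)/2}`,
`ρ̂ = τ/2 + (ρ + η)/4`, `α ∈ (0,1]`, `P u` the proximal point at `u`, and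
`F(u) = f(P u) + (ρ̂/2)‖P u − u‖²` the Moreau envelope, we have for every `T`:
`min_{t ≤ T} ‖ρ̂(x_t − P x_t)‖ ≤ √((F(x₀) − inf f)/(c(T+1)))`
where `c = α(2ρ̂ − ρ − η − β)/(2ρ̂(ρ̂ + τ − ρ − η))`. -/
theorem model_based_gradient_rate {d : ℕ}
    (f : EuclideanSpace ℝ (Fin d) → ℝ)
    (ρ η β : ℝ) (hρ : 0 < ρ) (hη : 0 < η) (hβ : 0 < β)
    (hfwc : ConvexOn ℝ Set.univ (fun z => f z + ρ / 2 * ‖z‖ ^ 2))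
    (hf : Continuous f) (hbdd : BddBelow (Set.range f))
    (model : EuclideanSpace ℝ (Fin d) → EuclideanSpace ℝ (Fin d) → ℝ)
    (hmwc : ∀ x, ConvexOn ℝ Set.univ (fun z => model x z + η / 2 * ‖z‖ ^ 2))
    (hmcont : ∀ x, Continuous (model x))
    (happrox : ∀ x y, |f y - model x y| ≤ β / 2 * ‖y - x‖ ^ 2)
    (τ : ℝ) (hτ : τ > max η (max (2 * ρ) ((4 * β + ρ + η) / 2)))
    (rh : ℝ) (hrh : rh = τ / 2 + (ρ + η) / 4)
    (α : ℝ) (hα : α ∈ Set.Ioc (0 : ℝ) 1)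
    (P : EuclideanSpace ℝ (Fin d) → EuclideanSpace ℝ (Fin d))
    (hP : ∀ u z, f (P u) + rh / 2 * ‖P u - u‖ ^ 2 ≤ f z + rh / 2 * ‖z - u‖ ^ 2)
    (x y : ℕ → EuclideanSpace ℝ (Fin d))
    (hy : ∀ t, ∀ z, model (x t) (y t) + τ / 2 * ‖y t - x t‖ ^ 2 ≤
      model (x t) z + τ / 2 * ‖z - x t‖ ^ 2)
    (hx : ∀ t, x (t + 1) = (1 - α) • x t + α • y t) :
    ∀ T : ℕ, ∃ t ≤ T, ‖rh • (x t - P (x t))‖ ≤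
      Real.sqrt (((f (P (x 0)) + rh / 2 * ‖P (x 0) - x 0‖ ^ 2) - (⨅ z, f z)) /
        (α * (2 * rh - ρ - η - β) / (2 * rh * (rh + τ - ρ - η)) * (T + 1))) := by
  obtain ⟨hα0, hα1⟩ := hα
  have hτη : η < τ := lt_of_le_of_lt (le_max_left _ _) hτ
  have hτρ : 2 * ρ < τ := lt_of_le_of_lt ((le_max_left _ _).trans (le_max_right _ _)) hτ
  have hτβ : (4 * β + ρ + η) / 2 < τ :=
    lt_of_le_of_lt ((le_max_right _ _).trans (le_max_right _ _)) hτ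
  have hrh0 : 0 < rh := by rw [hrh]; linarith
  have hD : 0 < rh + τ - ρ - η := by rw [hrh]; linarith
  have hK : 0 < 2 * rh - ρ - η - β := by rw [hrh]; linarith
  have hβτ : rh + β - τ < 0 := by rw [hrh]; linarith
  set Fs : ℕ → ℝ := fun t => f (P (x t)) + rh / 2 * ‖P (x t) - x t‖ ^ 2 with hFs
  -- per-step descent
  have hdesc : ∀ t, α * (2 * rh - ρ - η - β) * (rh * ‖P (x t) - x t‖ ^ 2)
      ≤ 2 * (rh + τ - ρ - η) * (Fs t - Fs (t + 1)) := by
    intro t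
    have i1 := strong_min f ρ rh hfwc (x t) (P (x t)) (hP (x t)) (y t)
    rw [norm_sub_rev (y t) (P (x t))] at i1
    have i2 := strong_min (model (x t)) η τ (hmwc (x t)) (x t) (y t) (hy t) (P (x t))
    have a1 := (abs_le.mp (happrox (x t) (P (x t)))).1
    have a2 := (abs_le.mp (happrox (x t) (y t))).2
    have hBneg : (rh + β - τ) * ‖y t - x t‖ ^ 2 ≤ 0 :=
      mul_nonpos_of_nonpos_of_nonneg (by linarith) (sq_nonneg _)
    have G2 : (rh + τ - ρ - η) * ‖P (x t) - y t‖ ^ 2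
        ≤ (τ + β - rh) * ‖P (x t) - x t‖ ^ 2 := by linarith [i1, i2, a1, a2, hBneg]
    have hid : ‖P (x t) - x (t + 1)‖ ^ 2 = (1 - α) * ‖P (x t) - x t‖ ^ 2
        + α * ‖P (x t) - y t‖ ^ 2 - α * (1 - α) * ‖y t - x t‖ ^ 2 := by
      rw [norm_sub_rev, hx t, combo_norm_sq α (x t) (y t) (P (x t)),
        norm_sub_rev (x t), norm_sub_rev (y t)]
    have G1 := hP (x (t + 1)) (P (x t))
    rw [hid] at G1
    have h3 := mul_le_mul_of_nonneg_left G2 (mul_nonneg hrh0.le hα0.le)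
    have h4 := mul_le_mul_of_nonneg_left G1 (by linarith : (0:ℝ) ≤ 2 * (rh + τ - ρ - η))
    have h5 : 0 ≤ (rh + τ - ρ - η) * rh * α * (1 - α) * ‖y t - x t‖ ^ 2 := by
      have := sq_nonneg ‖y t - x t‖
      have h1α : (0:ℝ) ≤ 1 - α := by linarith
      positivity
    simp only [hFs]
    linarith [h3, h4, h5]
  -- lower bound on Fs
  have hinf : ∀ t, (⨅ z, f z) ≤ Fs t := by
    intro t
    refine (ciInf_le hbdd (P (x t))).trans ?_
    have : 0 ≤ rh / 2 * ‖P (x t) - x t‖ ^ 2 := mul_nonneg (by linarith) (sq_nonneg _)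
    simp only [hFs]; linarith
  intro T
  obtain ⟨t0, ht0mem, ht0min⟩ := Finset.exists_min_image (Finset.range (T + 1))
    (fun t => ‖P (x t) - x t‖) ⟨0, Finset.mem_range.mpr (Nat.succ_pos T)⟩
  refine ⟨t0, Nat.lt_succ_iff.mp (Finset.mem_range.mp ht0mem), ?_⟩
  apply Real.le_sqrt_of_sq_le
  have hnorm : ‖rh • (x t0 - P (x t0))‖ = rh * ‖P (x t0) - x t0‖ := by
    rw [norm_smul, norm_sub_rev, Real.norm_eq_abs, abs_of_pos hrh0]
  rw [hnorm]
  set A0 : ℝ := ‖P (x t0) - x t0‖ with hA0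
  set N : ℝ := (f (P (x 0)) + rh / 2 * ‖P (x 0) - x 0‖ ^ 2) - (⨅ z, f z) with hN
  have hT1 : (0:ℝ) < (T:ℝ) + 1 := by positivity
  have hden : 0 < α * (2 * rh - ρ - η - β) / (2 * rh * (rh + τ - ρ - η)) * ((T:ℝ) + 1) := by
    have h1 : 0 < 2 * rh * (rh + τ - ρ - η) := by positivity
    have h2 : 0 < α * (2 * rh - ρ - η - β) := by positivity
    positivity
  rw [le_div_iff₀ hden]
  -- sum of per-step bounds
  have hsum : (((T:ℝ) + 1)) * (α * (2 * rh - ρ - η - β) * (rh * A0 ^ 2))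
      ≤ 2 * (rh + τ - ρ - η) * (Fs 0 - Fs (T + 1)) := by
    have step : ∀ t ∈ Finset.range (T + 1),
        α * (2 * rh - ρ - η - β) * (rh * A0 ^ 2)
          ≤ α * (2 * rh - ρ - η - β) * (rh * ‖P (x t) - x t‖ ^ 2) := by
      intro t ht
      have hle := ht0min t ht
      have hsq : A0 ^ 2 ≤ ‖P (x t) - x t‖ ^ 2 :=
        pow_le_pow_left₀ (norm_nonneg _) hle 2
      have hc : 0 ≤ α * (2 * rh - ρ - η - β) * rh := by positivity
      nlinarith [hc, hsq]
    calc (((T:ℝ) + 1)) * (α * (2 * rh - ρ - η - β) * (rh * A0 ^ 2))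
        = ∑ t ∈ Finset.range (T + 1), α * (2 * rh - ρ - η - β) * (rh * A0 ^ 2) := by
          rw [Finset.sum_const, Finset.card_range, nsmul_eq_mul]; push_cast; ring
      _ ≤ ∑ t ∈ Finset.range (T + 1),
            α * (2 * rh - ρ - η - β) * (rh * ‖P (x t) - x t‖ ^ 2) :=
          Finset.sum_le_sum step
      _ ≤ ∑ t ∈ Finset.range (T + 1), 2 * (rh + τ - ρ - η) * (Fs t - Fs (t + 1)) :=
          Finset.sum_le_sum (fun t _ => hdesc t)
      _ = 2 * (rh + τ - ρ - η) * (Fs 0 - Fs (T + 1)) := by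
          rw [← Finset.mul_sum, Finset.sum_range_sub' (fun t => Fs t)]
  have hbig : (((T:ℝ) + 1)) * (α * (2 * rh - ρ - η - β) * (rh * A0 ^ 2))
      ≤ 2 * (rh + τ - ρ - η) * N := by
    have h1 := hinf (T + 1)
    have hFs0 : Fs 0 = f (P (x 0)) + rh / 2 * ‖P (x 0) - x 0‖ ^ 2 := rfl
    have h2 : Fs 0 - Fs (T + 1) ≤ N := by rw [hN, ← hFs0]; linarith
    refine hsum.trans ?_
    have := mul_le_mul_of_nonneg_left h2 (by linarith : (0:ℝ) ≤ 2 * (rh + τ - ρ - η))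
    linarith
  -- conclude
  have hkey : (rh * A0) ^ 2 * (α * (2 * rh - ρ - η - β) / (2 * rh * (rh + τ - ρ - η)) * ((T:ℝ) + 1))
        * (2 * rh * (rh + τ - ρ - η))
      = ((((T:ℝ) + 1)) * (α * (2 * rh - ρ - η - β) * (rh * A0 ^ 2))) * rh := by
    field_simp
  have hpos2 : (0:ℝ) < 2 * rh * (rh + τ - ρ - η) := by positivity
  have hfin : (rh * A0) ^ 2 * (α * (2 * rh - ρ - η - β) / (2 * rh * (rh + τ - ρ - η)) * ((T:ℝ) + 1))
        * (2 * rh * (rh + τ - ρ - η)) ≤ N * (2 * rh * (rh + τ - ρ - η)) := by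
    rw [hkey]
    have := mul_le_mul_of_nonneg_right hbig hrh0.le
    nlinarith [this]
  exact le_of_mul_le_mul_right hfin hpos2
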